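/- (Suppression law) Let G be a finite abelian group of m×m unitary monomial matrices, λ : G → ℂ∖{0} a group homomorphism, and U an m×m unitary matrix such that U g U† is a diagonal matrix for every g ∈ G. Let Ψ be a vector in the joint eigenspace V_λ^G = {w : B_n(g) w = λ(g) w for all g ∈ G}. If ν ∈ T(m,n) satisfies ∑_{g∈G} λ(g)^{−1} ∏_i ([U g U†]_{ii})^{ν(i)} = 0, then ⟨e_ν, B_n(U) Ψ⟩ = 0. -/

import Mathlib

namespace BSF

variable {α : Type*} [Fintype α] [DecidableEq α]

/-- The canonical list in which each index `i` is repeated `ν i` times. -/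
noncomputable def repList (ν : α → ℕ) : List α :=
  Finset.univ.toList.flatMap fun i => List.replicate (ν i) i

set_option linter.unusedSectionVars false in
lemma repList_length (ν : α → ℕ) : (repList ν).length = ∑ i, ν i := by
  simp [repList, List.length_flatMap]

/-- The index set `T(m,n)`: occupation-number tuples with total `n`. -/
def BosonIdx (α : Type*) [Fintype α] (n : ℕ) := {ν : α → ℕ // ∑ i, ν i = n}

instance {n : ℕ} : DecidableEq (BosonIdx α n) :=
  inferInstanceAs (DecidableEq {ν : α → ℕ // ∑ i, ν i = n})

noncomputable instance {n : ℕ} : Fintype (BosonIdx α n) :=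
  Fintype.ofInjective
    (fun ν : BosonIdx α n => fun i : α =>
      (⟨ν.1 i, by
        have h := Finset.single_le_sum (f := ν.1) (fun j _ => Nat.zero_le _) (Finset.mem_univ i)
        rw [ν.2] at h
        omega⟩ : Fin (n + 1)))
    (fun a b hab => Subtype.ext (funext fun i => congrArg Fin.val (congrFun hab i)))

/-- The permanent of a square complex matrix. -/
noncomputable def permanent {n : ℕ} (M : Matrix (Fin n) (Fin n) ℂ) : ℂ :=
  ∑ σ : Equiv.Perm (Fin n), ∏ i, M (σ i) i

/-- The canonical repetition function associated with an occupation tuple. -/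
noncomputable def repFun {n : ℕ} (ν : BosonIdx α n) : Fin n → α :=
  fun k => (repList ν.1).get (Fin.cast ((repList_length ν.1).trans ν.2).symm k)

/-- The `n`-boson representation of a matrix `S`. -/
noncomputable def bosonRep (n : ℕ) (S : Matrix α α ℂ) :
    Matrix (BosonIdx α n) (BosonIdx α n) ℂ :=
  Matrix.of fun ν ν' =>
    permanent (Matrix.of fun k l => S (repFun ν k) (repFun ν' l)) /
      (Real.sqrt ((∏ i, (ν.1 i).factorial * (ν'.1 i).factorial : ℕ) : ℝ) : ℂ)

/-- Relabeling an occupation tuple by (precomposition with) a permutation of the modes. -/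
def permIdx {n : ℕ} (σ : Equiv.Perm α) (ν : BosonIdx α n) : BosonIdx α n :=
  ⟨ν.1 ∘ σ, show ∑ i, ν.1 (σ i) = n from (Equiv.sum_comp σ ν.1).trans ν.2⟩

section AuxLemmas

open Finset

lemma count_repList (ν : α → ℕ) (a : α) : (repList ν).count a = ν a := by
  rw [repList, List.count_flatMap]
  have h1 : (List.count a ∘ fun i => List.replicate (ν i) i)
      = fun i => if i = a then ν i else 0 := by
    funext i
    simp [List.count_replicate]
  rw [h1, Finset.sum_map_toList]
  simp

lemma card_repFun_fiber {n : ℕ} (ν : BosonIdx α n) (a : α) :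
    ({k | repFun ν k = a} : Finset (Fin n)).card = ν.1 a := by
  have h : (repList ν.1).length = n := (repList_length ν.1).trans ν.2
  have hv := Fin.card_filter_univ_eq_vector_get_eq_count a
    (⟨repList ν.1, h⟩ : List.Vector α n)
  rw [show List.Vector.toList (⟨repList ν.1, h⟩ : List.Vector α n) = repList ν.1 from rfl,
    count_repList] at hv
  rw [← hv]
  rfl

lemma card_repFun_fiber' {n : ℕ} (ν : BosonIdx α n) (a : α) :
    Fintype.card {k : Fin n // repFun ν k = a} = ν.1 a := by
  rw [Fintype.card_subtype]
  exact card_repFun_fiber ν a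

lemma prod_pow_repFun {n : ℕ} (ν : BosonIdx α n) {M : Type*} [CommMonoid M] (h : α → M) :
    ∏ k, h (repFun ν k) = ∏ i, h i ^ ν.1 i := by
  rw [← Finset.prod_fiberwise_of_maps_to (g := repFun ν) (t := Finset.univ)
    (fun k _ => Finset.mem_univ (repFun ν k)) (fun k => h (repFun ν k))]
  refine Finset.prod_congr rfl fun i _ => ?_
  rw [Finset.prod_congr rfl (fun k hk => by rw [(Finset.mem_filter.mp hk).2]),
    Finset.prod_const, card_repFun_fiber]

lemma exists_comp_perm {n : ℕ} (f g : Fin n → α)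
    (h : ∀ a, Fintype.card {k // f k = a} = Fintype.card {k // g k = a}) :
    ∃ τ : Equiv.Perm (Fin n), ∀ k, g (τ k) = f k := by
  have e : ∀ a, {k // f k = a} ≃ {k // g k = a} := fun a => Fintype.equivOfCardEq (h a)
  refine ⟨(Equiv.sigmaFiberEquiv f).symm.trans
    ((Equiv.sigmaCongrRight e).trans (Equiv.sigmaFiberEquiv g)), fun k => ?_⟩
  exact (e (f k) ⟨k, rfl⟩).2

lemma permanent_row_smul {n : ℕ} (c : Fin n → ℂ) (M : Matrix (Fin n) (Fin n) ℂ) :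
    permanent (Matrix.of fun k l => c k * M k l) = (∏ k, c k) * permanent M := by
  unfold permanent
  rw [Finset.mul_sum]
  refine Finset.sum_congr rfl fun σ _ => ?_
  simp only [Matrix.of_apply]
  rw [Finset.prod_mul_distrib, Equiv.prod_comp σ c]

lemma permanent_col_smul {n : ℕ} (c : Fin n → ℂ) (M : Matrix (Fin n) (Fin n) ℂ) :
    permanent (Matrix.of fun k l => c l * M k l) = (∏ l, c l) * permanent M := by
  unfold permanent
  rw [Finset.mul_sum]
  refine Finset.sum_congr rfl fun σ _ => ?_
  simp only [Matrix.of_apply]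
  rw [Finset.prod_mul_distrib]

lemma permanent_comp_col {n : ℕ} (τ : Equiv.Perm (Fin n)) (M : Matrix (Fin n) (Fin n) ℂ) :
    permanent (Matrix.of fun k l => M k (τ l)) = permanent M := by
  unfold permanent
  refine (Fintype.sum_equiv (Equiv.mulRight τ)
    (fun ρ => ∏ j, M (ρ j) j) (fun σ => ∏ i, (Matrix.of fun k l => M k (τ l)) (σ i) i)
    (fun ρ => ?_)).symm
  simp only [Matrix.of_apply, Equiv.coe_mulRight, Equiv.Perm.coe_mul, Function.comp_apply]
  exact (Equiv.prod_comp τ (fun j => M (ρ j) j)).symm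

lemma permanent_indicator {n : ℕ} (f g : Fin n → α) :
    permanent (Matrix.of fun k l => if f k = g l then (1 : ℂ) else 0) =
      (Fintype.card {τ : Equiv.Perm (Fin n) // f ∘ τ = g} : ℂ) := by
  unfold permanent
  simp only [Matrix.of_apply]
  rw [Fintype.card_subtype, ← Finset.sum_boole]
  refine Finset.sum_congr rfl fun σ _ => ?_
  rw [Finset.prod_boole]
  congr 1
  rw [eq_iff_iff]
  constructor
  · intro hh
    funext i
    exact hh i (Finset.mem_univ i)
  · intro hh i _
    exact congrFun hh i

end AuxLemmas

section BosonLemmas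

lemma card_fiber_comp_perm {n : ℕ} (f : Fin n → α) (τ : Equiv.Perm (Fin n)) (a : α) :
    Fintype.card {k // f (τ k) = a} = Fintype.card {k // f k = a} :=
  Fintype.card_congr (Equiv.subtypeEquiv τ (fun _ => Iff.rfl))

lemma bosonRep_mul_monomial {n : ℕ} (A S : Matrix α α ℂ) (π : Equiv.Perm α) (d : α → ℂ)
    (hS : ∀ i j, S j i = if j = π i then d i else 0) (ν ν' : BosonIdx α n) :
    bosonRep n (A * S) ν ν' = (∏ i, d i ^ ν'.1 i) * bosonRep n A ν (permIdx π⁻¹ ν') := by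
  set μ := permIdx π⁻¹ ν' with hμ
  have hAS : ∀ j i, (A * S) j i = A j (π i) * d i := by
    intro j i
    rw [Matrix.mul_apply]
    rw [Finset.sum_congr rfl (fun l _ => by rw [hS i l, mul_ite, mul_zero])]
    simp
  -- fiber counts
  have hfib : ∀ a, Fintype.card {k // π (repFun ν' k) = a}
      = Fintype.card {k // repFun μ k = a} := by
    intro a
    have hiff : ∀ k : Fin n, π (repFun ν' k) = a ↔ repFun ν' k = π⁻¹ a := fun k =>
      (Equiv.Perm.eq_inv_iff_eq).symm
    rw [Fintype.card_congr (Equiv.subtypeEquivRight hiff),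
      card_repFun_fiber' ν' (π⁻¹ a), card_repFun_fiber' μ a]
    rfl
  obtain ⟨τ, hτ⟩ := exists_comp_perm (fun k => π (repFun ν' k)) (repFun μ) hfib
  -- permanent step
  have hper : permanent (Matrix.of fun k l => (A * S) (repFun ν k) (repFun ν' l))
      = (∏ i, d i ^ ν'.1 i) *
        permanent (Matrix.of fun k l => A (repFun ν k) (repFun μ l)) := by
    have h1 : (Matrix.of fun k l => (A * S) (repFun ν k) (repFun ν' l))
        = Matrix.of fun k l => d (repFun ν' l) *
            ((Matrix.of fun k l => A (repFun ν k) (repFun μ l)) k (τ l)) := by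
      ext k l
      simp only [Matrix.of_apply, hAS, hτ l]
      ring
    rw [h1]
    have h2 : (Matrix.of fun k l => d (repFun ν' l) *
          ((Matrix.of fun k l => A (repFun ν k) (repFun μ l)) k (τ l)))
        = Matrix.of fun k l => d (repFun ν' l) *
            ((Matrix.of fun k l => (Matrix.of fun k' l' => A (repFun ν k') (repFun μ l')) k (τ l)) k l) := rfl
    rw [h2, permanent_col_smul, permanent_comp_col, prod_pow_repFun]
  -- factorial step
  have hfac : (∏ i, (ν.1 i).factorial * (μ.1 i).factorial)
      = ∏ i, (ν.1 i).factorial * (ν'.1 i).factorial := by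
    rw [Finset.prod_mul_distrib, Finset.prod_mul_distrib]
    congr 1
    exact Equiv.prod_comp π⁻¹ (fun i => (ν'.1 i).factorial)
  show permanent _ / _ = _ * (permanent _ / _)
  rw [hper, hfac, mul_div_assoc]

lemma bosonRep_one {n : ℕ} : bosonRep n (1 : Matrix α α ℂ) = 1 := by
  ext μ κ
  have hE : (Matrix.of fun k l => (1 : Matrix α α ℂ) (repFun μ k) (repFun κ l))
      = Matrix.of fun k l => if repFun μ k = repFun κ l then (1 : ℂ) else 0 := by
    ext k l
    simp [Matrix.one_apply]
  by_cases h : μ = κ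
  · subst h
    show permanent _ / _ = _
    rw [hE, permanent_indicator, DomMulAct.stabilizer_card (repFun μ), Matrix.one_apply_eq]
    have hcard : ∀ a, Fintype.card {k // repFun μ k = a} = μ.1 a := card_repFun_fiber' μ
    have h1 : (∏ a, (Fintype.card {k // repFun μ k = a}).factorial)
        = ∏ a, (μ.1 a).factorial := by
      exact Finset.prod_congr rfl fun a _ => by rw [hcard a]
    have h2 : (∏ i, (μ.1 i).factorial * (μ.1 i).factorial : ℕ)
        = (∏ i, (μ.1 i).factorial) * (∏ i, (μ.1 i).factorial) := Finset.prod_mul_distrib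
    rw [h1, h2]
    push_cast
    rw [Real.sqrt_mul_self (by positivity)]
    have hne : ((∏ i, (μ.1 i).factorial : ℕ) : ℂ) ≠ 0 := by
      exact_mod_cast Nat.cast_ne_zero.mpr (Finset.prod_ne_zero_iff.mpr
        fun i _ => Nat.factorial_ne_zero _)
    push_cast at hne ⊢
    field_simp
  · show permanent _ / _ = _
    rw [hE, permanent_indicator, Matrix.one_apply_ne h]
    have : IsEmpty {τ : Equiv.Perm (Fin n) // repFun μ ∘ τ = repFun κ} := by
      refine ⟨fun ⟨τ, hτ⟩ => h (Subtype.ext (funext fun a => ?_))⟩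
      rw [← card_repFun_fiber' μ a, ← card_repFun_fiber' κ a,
        ← card_fiber_comp_perm (repFun μ) τ a]
      exact Fintype.card_congr (Equiv.subtypeEquivRight (fun k => by
        rw [show repFun μ (τ k) = repFun κ k from congrFun hτ k]))
    rw [Fintype.card_eq_zero]
    simp

lemma bosonRep_monomial {n : ℕ} (S : Matrix α α ℂ) (π : Equiv.Perm α) (d : α → ℂ)
    (hS : ∀ i j, S j i = if j = π i then d i else 0) (μ ν' : BosonIdx α n) :
    bosonRep n S μ ν' = if μ = permIdx π⁻¹ ν' then ∏ i, d i ^ ν'.1 i else 0 := by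
  have h := bosonRep_mul_monomial (1 : Matrix α α ℂ) S π d hS μ ν'
  rw [one_mul] at h
  rw [h, bosonRep_one, Matrix.one_apply]
  split_ifs <;> simp

lemma bosonRep_mul_of_monomial {n : ℕ} (A S : Matrix α α ℂ) (π : Equiv.Perm α) (d : α → ℂ)
    (hS : ∀ i j, S j i = if j = π i then d i else 0) :
    bosonRep n (A * S) = bosonRep n A * bosonRep n S := by
  ext ν ν'
  rw [Matrix.mul_apply, bosonRep_mul_monomial A S π d hS]
  rw [Finset.sum_congr rfl (fun μ _ => by rw [bosonRep_monomial S π d hS μ ν'])]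
  simp only [mul_ite, mul_zero, Finset.sum_ite_eq', Finset.mem_univ, if_true]
  ring

lemma bosonRep_diag_mul {n : ℕ} (D A : Matrix α α ℂ) (hD : D.IsDiag) (ν ν' : BosonIdx α n) :
    bosonRep n (D * A) ν ν' = (∏ i, (D i i) ^ ν.1 i) * bosonRep n A ν ν' := by
  have hDA : ∀ j i, (D * A) j i = D j j * A j i := by
    intro j i
    rw [Matrix.mul_apply]
    exact Finset.sum_eq_single j (fun b _ hb => by rw [hD (Ne.symm hb), zero_mul])
      (fun hj => absurd (Finset.mem_univ j) hj)
  have hper : permanent (Matrix.of fun k l => (D * A) (repFun ν k) (repFun ν' l))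
      = (∏ i, (D i i) ^ ν.1 i) *
        permanent (Matrix.of fun k l => A (repFun ν k) (repFun ν' l)) := by
    have h1 : (Matrix.of fun k l => (D * A) (repFun ν k) (repFun ν' l))
        = Matrix.of fun k l => D (repFun ν k) (repFun ν k) *
            ((Matrix.of fun k l => A (repFun ν k) (repFun ν' l)) k l) := by
      ext k l
      simp [hDA]
    rw [h1, permanent_row_smul,
      show (∏ k, D (repFun ν k) (repFun ν k)) = ∏ i, (D i i) ^ ν.1 i from
        prod_pow_repFun ν (fun i => D i i)]
  show permanent _ / _ = _ * (permanent _ / _)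
  rw [hper, mul_div_assoc]

end BosonLemmas

/-- Suppression law, Corollary 1 of the paper. If an LOC `U` simultaneously
diagonalizes a finite abelian group `G` of unitary monomial matrices, the input state `Ψ` lies
in the joint eigenspace `V_λ^G`, and the outcome `ν` satisfies
`∑ g, λ(g)⁻¹ ∏ i, ([U g U†]_{ii})^{ν i} = 0`, then `⟨e_ν, B_n(U) Ψ⟩ = 0`. -/
theorem suppression_law {m n : ℕ} (hn : 0 < n)
    {G : Type*} [CommGroup G] [Fintype G]
    (ρ : G →* Matrix (Fin m) (Fin m) ℂ)
    -- each `ρ g` is a unitary monomial matrix: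
    (hmono : ∀ g : G, ∃ (π : Equiv.Perm (Fin m)) (d : Fin m → ℂ),
      (∀ i, ‖d i‖ = 1) ∧ ∀ i j, ρ g j i = if j = π i then d i else 0)
    (lam : G →* ℂˣ)
    (U : Matrix (Fin m) (Fin m) ℂ) (hU : U ∈ Matrix.unitaryGroup (Fin m) ℂ)
    (hdiag : ∀ g : G, (U * ρ g * U.conjTranspose).IsDiag)
    (Ψ : BosonIdx (Fin m) n → ℂ)
    (hΨ : ∀ g : G, (bosonRep n (ρ g)).mulVec Ψ = (lam g : ℂ) • Ψ)
    (ν : BosonIdx (Fin m) n)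
    (hν : ∑ g : G, ((lam g : ℂ))⁻¹ * ∏ i, ((U * ρ g * U.conjTranspose) i i) ^ ν.1 i = 0) :
    ∑ μ : BosonIdx (Fin m) n,
      (starRingEnd ℂ) ((Pi.single ν (1 : ℂ) : BosonIdx (Fin m) n → ℂ) μ) *
        ((bosonRep n U).mulVec Ψ) μ = 0 := by
  classical
  have hgoal : ∑ μ : BosonIdx (Fin m) n,
      (starRingEnd ℂ) ((Pi.single ν (1 : ℂ) : BosonIdx (Fin m) n → ℂ) μ) *
        ((bosonRep n U).mulVec Ψ) μ = ((bosonRep n U).mulVec Ψ) ν := by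
    rw [Finset.sum_eq_single ν]
    · simp
    · intro μ _ hμ
      simp [Pi.single_apply, hμ]
    · intro h
      exact absurd (Finset.mem_univ ν) h
  rw [hgoal]
  set t := ((bosonRep n U).mulVec Ψ) ν with ht
  have key : ∀ g : G,
      (lam g : ℂ) * t = (∏ i, ((U * ρ g * U.conjTranspose) i i) ^ ν.1 i) * t := by
    intro g
    obtain ⟨π, d, hd1, hS⟩ := hmono g
    have hUU : U.conjTranspose * U = 1 := by
      simpa [Matrix.star_eq_conjTranspose] using hU.1
    have hUg : (U * ρ g * U.conjTranspose) * U = U * ρ g := by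
      rw [Matrix.mul_assoc (U * ρ g), hUU, Matrix.mul_one]
    have h1 : (lam g : ℂ) * t = ((bosonRep n (U * ρ g)).mulVec Ψ) ν := by
      rw [bosonRep_mul_of_monomial U (ρ g) π d hS, ← Matrix.mulVec_mulVec, hΨ g,
        Matrix.mulVec_smul]
      simp [ht, smul_eq_mul]
    have h2 : ((bosonRep n ((U * ρ g * U.conjTranspose) * U)).mulVec Ψ) ν
        = (∏ i, ((U * ρ g * U.conjTranspose) i i) ^ ν.1 i) * t := by
      show ∑ ν', bosonRep n ((U * ρ g * U.conjTranspose) * U) ν ν' * Ψ ν' = _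
      rw [Finset.sum_congr rfl (fun ν' _ => by
        rw [bosonRep_diag_mul _ U (hdiag g) ν ν', mul_assoc])]
      rw [← Finset.mul_sum, ht]
      rfl
    conv_lhs => rw [h1, ← hUg]
    exact h2
  have hlamne : ∀ g : G, (lam g : ℂ) ≠ 0 := fun g => Units.ne_zero (lam g)
  have hstep : ∀ g : G,
      t = (lam g : ℂ)⁻¹ * ((∏ i, ((U * ρ g * U.conjTranspose) i i) ^ ν.1 i) * t) := by
    intro g
    rw [← key g, ← mul_assoc, inv_mul_cancel₀ (hlamne g), one_mul]
  have hne : (Fintype.card G : ℂ) ≠ 0 := Nat.cast_ne_zero.mpr Fintype.card_ne_zero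
  have hsum : (Fintype.card G : ℂ) * t = 0 := by
    calc (Fintype.card G : ℂ) * t = ∑ _g : G, t := by
          rw [Finset.sum_const, Finset.card_univ, nsmul_eq_mul]
      _ = ∑ g : G, (lam g : ℂ)⁻¹ *
            ((∏ i, ((U * ρ g * U.conjTranspose) i i) ^ ν.1 i) * t) :=
          Finset.sum_congr rfl fun g _ => hstep g
      _ = (∑ g : G, (lam g : ℂ)⁻¹ *
            ∏ i, ((U * ρ g * U.conjTranspose) i i) ^ ν.1 i) * t := by
          rw [Finset.sum_mul]
          exact Finset.sum_congr rfl fun g _ => by ring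
      _ = 0 := by rw [hν, zero_mul]
  rcases mul_eq_zero.mp hsum with h | h
  · exact absurd h hne
  · exact h


end BSF
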